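/- Consider S servers, where server s has m_s client paths, and let m = Σ_{s=1}^{S} m_s be the total number of paths, defined on a finite set V of n nodes, with path p of length d_p (number of nodes). Suppose the whole collection P of m paths is consistent and, for each s, the m_s paths of server s all have the same final node r_s. Set N_max = min{ Σ_{p ∈ P} d_p, Σ_{s=1}^{S} [ (m_s² + 3m_s − 2)/2 + 2·m_s·(m − m_s) ] } and i_max = max{k ∈ ℕ : Σ_{i=1}^{k} i·C(m,i) ≤ N_max}. Then the number of identifiable nodes is at most min{Σ_{i=1}^{i_max} C(m,i) + ⌊(N_max − Σ_{i=1}^{i_max} i·C(m,i))/(i_max + 1)⌋, n}. -/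

import Mathlib

/-- The contiguous segment of the list `l` between (the first occurrences of) the
nodes `u` and `w`, inclusive, taken in the order of `l`. -/
def seg {V : Type*} [DecidableEq V] (l : List V) (u w : V) : List V :=
  (l.drop (min (l.idxOf u) (l.idxOf w))).take
    (max (l.idxOf u) (l.idxOf w) - min (l.idxOf u) (l.idxOf w) + 1)

/-- Two paths are consistent if, for any two nodes `u, w` appearing on both, the
contiguous segment of one between `u` and `w` equals, up to reversal, the
contiguous segment of the other between `u` and `w`. -/
def ConsistentPair {V : Type*} [DecidableEq V] (l l' : List V) : Prop :=
  ∀ u w : V, u ∈ l → w ∈ l → u ∈ l' → w ∈ l' →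
    seg l u w = seg l' u w ∨ seg l u w = (seg l' u w).reverse

/-- A family of paths is consistent if every two of its paths are consistent. -/
def Consistent {V : Type*} [DecidableEq V] {ι : Type*} (p : ι → List V) : Prop :=
  ∀ i j, ConsistentPair (p i) (p j)

/-- The encoding of a node `v` w.r.t. an indexed family of monitoring paths `p`:
the set of indices of paths on which `v` appears. -/
def encoding {V : Type*} [DecidableEq V] {ι : Type*} [Fintype ι] [DecidableEq ι]
    (p : ι → List V) (v : V) : Finset ι :=
  Finset.univ.filter fun i => v ∈ p i

/-- A node is identifiable iff its encoding is nonempty and distinct from the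
encoding of every other node. -/
def Identifiable {V : Type*} [DecidableEq V] {ι : Type*} [Fintype ι] [DecidableEq ι]
    (p : ι → List V) (v : V) : Prop :=
  encoding p v ≠ ∅ ∧ ∀ w : V, w ≠ v → encoding p w ≠ encoding p v

/-- `i_max = max {k : Σ_{i=1}^k i·C(m,i) ≤ N}` (the partial sums are constant beyond
`k = m` since `C(m,i) = 0` for `i > m`, so the maximum is realized within `{0,…,m}`). -/
def imax (m N : ℕ) : ℕ :=
  Nat.findGreatest (fun k => ∑ i ∈ Finset.Icc 1 k, i * m.choose i ≤ N) m

/-- `Σ_{i=1}^{i_max} C(m,i) + ⌊(N − Σ_{i=1}^{i_max} i·C(m,i)) / (i_max + 1)⌋`. -/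
def boundFormula (m N : ℕ) : ℕ :=
  (∑ i ∈ Finset.Icc 1 (imax m N), m.choose i) +
    (N - ∑ i ∈ Finset.Icc 1 (imax m N), i * m.choose i) / (imax m N + 1)




lemma seg_subset {V : Type*} [DecidableEq V] {l : List V} {u w x : V}
    (h : x ∈ seg l u w) : x ∈ l :=
  List.mem_of_mem_drop (List.mem_of_mem_take h)

lemma mem_seg {V : Type*} [DecidableEq V] {l : List V} {u w x : V} (hx : x ∈ l)
    (h1 : min (l.idxOf u) (l.idxOf w) ≤ l.idxOf x)
    (h2 : l.idxOf x ≤ max (l.idxOf u) (l.idxOf w)) : x ∈ seg l u w := by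
  unfold seg
  set a := min (l.idxOf u) (l.idxOf w) with ha
  set b := max (l.idxOf u) (l.idxOf w) with hb
  have hxl : l.idxOf x < l.length := List.idxOf_lt_length_iff.mpr hx
  have hlen : ((l.drop a).take (b - a + 1)).length = min (b - a + 1) (l.length - a) := by
    simp
  refine List.mem_iff_getElem.mpr ⟨l.idxOf x - a, ?_, ?_⟩
  · rw [hlen]
    refine lt_min (by omega) (by omega)
  · rw [List.getElem_take, List.getElem_drop]
    have h3 : a + (l.idxOf x - a) = l.idxOf x := by omega
    simp only [h3]
    exact List.getElem_idxOf hxl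

lemma between_mem {V : Type*} [DecidableEq V] {l l' : List V} {u w x : V}
    (hc : ConsistentPair l l') (hu : u ∈ l) (hw : w ∈ l) (hu' : u ∈ l') (hw' : w ∈ l')
    (hx : x ∈ l)
    (h1 : min (l.idxOf u) (l.idxOf w) ≤ l.idxOf x)
    (h2 : l.idxOf x ≤ max (l.idxOf u) (l.idxOf w)) : x ∈ l' := by
  have hmem : x ∈ seg l u w := mem_seg hx h1 h2
  rcases hc u w hu hw hu' hw' with h | h
  · exact seg_subset (h ▸ hmem)
  · rw [h, List.mem_reverse] at hmem
    exact seg_subset hmem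

lemma suffix_mem {V : Type*} [DecidableEq V] {l l' : List V} {r v w : V}
    (hnd : l.Nodup) (hc : ConsistentPair l l')
    (hr : l.getLast? = some r) (hr' : l'.getLast? = some r)
    (hv : v ∈ l) (hv' : v ∈ l') (hw : w ∈ l)
    (hvw : l.idxOf v ≤ l.idxOf w) : w ∈ l' := by
  have hrl : r ∈ l := List.mem_of_getLast? hr
  have hrl' : r ∈ l' := List.mem_of_getLast? hr'
  have hne : l ≠ [] := by rintro rfl; simp at hr
  have hlen : 0 < l.length := List.length_pos_iff.mpr hne
  have hlast : l.getLast hne = r := by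
    have := List.getLast_mem_getLast? hne
    rw [hr, Option.mem_def] at this; exact (Option.some_inj.mp this).symm
  have hidxr : l.idxOf r = l.length - 1 := by
    have : l[l.length - 1] = r := by
      rw [← List.getLast_eq_getElem]; exact hlast
    rw [← this]
    exact List.Nodup.idxOf_getElem hnd _ (by omega)
  have hwlt : l.idxOf w < l.length := List.idxOf_lt_length_iff.mpr hw
  exact between_mem hc hv hrl hv' hrl' hw
    (by rw [hidxr]; exact le_trans (min_le_left _ _) hvw)
    (by rw [hidxr]; exact le_trans (by omega) (le_max_right _ _))

lemma even_sq_add (a : ℕ) : 2 ∣ a * a + a := by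
  have h : a * a + a = a * (a + 1) := by ring
  rw [h]
  exact (Nat.even_mul_succ_self a).two_dvd

lemma arith_ab {a b : ℕ} (ha : 1 ≤ a) (hb : 1 ≤ b) : a + b ≤ a * b + 1 := by
  obtain ⟨a', rfl⟩ := Nat.exists_eq_add_of_le ha
  obtain ⟨b', rfl⟩ := Nat.exists_eq_add_of_le hb
  have h : (1 + a') * (1 + b') = 1 + a' + b' + a' * b' := by ring
  omega

lemma arith_g_add {a b : ℕ} (ha : 1 ≤ a) (hb : 1 ≤ b) :
    a + (a * a + a - 2) / 2 + (b * b + 3 * b - 2) / 2 ≤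
      ((a + b) * (a + b) + (a + b) - 2) / 2 := by
  have hx := even_sq_add a
  have hy := even_sq_add b
  have hexp : (a + b) * (a + b) = a * a + b * b + 2 * (a * b) := by ring
  have hab := arith_ab ha hb
  obtain ⟨x, hx⟩ := hx
  obtain ⟨y, hy⟩ := hy
  generalize hA : a * a = A at hx hexp
  generalize hB : b * b = B at hy hexp
  generalize hC : (a + b) * (a + b) = C at hexp
  generalize hD : a * b = D at hexp hab
  omega

lemma arith_g_le_f (k : ℕ) : (k * k + k - 2) / 2 ≤ (k * k + 3 * k - 2) / 2 :=
  Nat.div_le_div_right (by omega)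

lemma arith_k_add_g (k : ℕ) (hk : 1 ≤ k) :
    k + (k * k + k - 2) / 2 ≤ (k * k + 3 * k - 2) / 2 := by
  have hx := even_sq_add k
  obtain ⟨x, hx⟩ := hx
  generalize hA : k * k = A at hx
  omega

def Laminar {α : Type*} [DecidableEq α] (F : Finset (Finset α)) : Prop :=
  ∀ E ∈ F, ∀ E' ∈ F, E ⊆ E' ∨ E' ⊆ E ∨ Disjoint E E'

lemma laminar_aux {α : Type*} [DecidableEq α] :
    ∀ n (F : Finset (Finset α)) (U : Finset α), F.card ≤ n →
      (∀ E ∈ F, E ⊆ U) → (∀ E ∈ F, E.Nonempty) → Laminar F →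
      ((∑ E ∈ F, E.card) ≤ (U.card * U.card + 3 * U.card - 2) / 2 ∧
        (U ∉ F → (∑ E ∈ F, E.card) ≤ (U.card * U.card + U.card - 2) / 2)) := by
  intro n
  induction n with
  | zero =>
    intro F U hcard _ _ _
    have : F = ∅ := Finset.card_eq_zero.mp (Nat.le_zero.mp hcard)
    subst this; simp
  | succ n ih =>
    intro F U hcard hsub hne hlam
    rcases eq_or_ne F ∅ with rfl | hFne
    · simp
    have hFne' : F.Nonempty := Finset.nonempty_iff_ne_empty.mpr hFne
    -- g-part
    have hg : U ∉ F → (∑ E ∈ F, E.card) ≤ (U.card * U.card + U.card - 2) / 2 := by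
      intro hU
      obtain ⟨M, hM, hMmax⟩ := Finset.exists_max_image F Finset.card hFne'
      have hMU : M ⊆ U := hsub M hM
      have hMneU : M ≠ U := by rintro rfl; exact hU hM
      have hMss : M ⊂ U := ssubset_of_subset_of_ne hMU hMneU
      have ha1 : 1 ≤ M.card := Finset.card_pos.mpr (hne M hM)
      have haU : M.card < U.card := Finset.card_lt_card hMss
      set F' := F.erase M with hF'
      have hsplit : (∑ E ∈ F, E.card) = M.card + ∑ E ∈ F', E.card := by
        rw [hF', ← Finset.add_sum_erase F _ hM]
      set F₁ := F'.filter (fun E => E ⊆ M) with hF₁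
      set F₂ := F'.filter (fun E => ¬ E ⊆ M) with hF₂
      have hsplit2 : (∑ E ∈ F', E.card) = (∑ E ∈ F₁, E.card) + ∑ E ∈ F₂, E.card :=
        (Finset.sum_filter_add_sum_filter_not F' _ _).symm
      have hcard' : F'.card ≤ n := by
        have h := Finset.card_erase_of_mem hM
        rw [← hF'] at h
        have h1 : 1 ≤ F.card := Finset.card_pos.mpr hFne'
        omega
      have hF'sub : F' ⊆ F := Finset.erase_subset _ _
      have lam1 : Laminar F₁ := fun E hE E' hE' =>
        hlam E (hF'sub (Finset.mem_filter.mp hE).1) E' (hF'sub (Finset.mem_filter.mp hE').1)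
      have lam2 : Laminar F₂ := fun E hE E' hE' =>
        hlam E (hF'sub (Finset.mem_filter.mp hE).1) E' (hF'sub (Finset.mem_filter.mp hE').1)
      have hM1 : M ∉ F₁ := fun h => (Finset.mem_erase.mp (Finset.mem_filter.mp h).1).1 rfl
      have h1 := (ih F₁ M (le_trans (Finset.card_le_card (le_trans
          (Finset.filter_subset _ _) (le_refl F'))) hcard')
        (fun E hE => (Finset.mem_filter.mp hE).2)
        (fun E hE => hne E (hF'sub (Finset.mem_filter.mp hE).1)) lam1).2 hM1
      have h2sub : ∀ E ∈ F₂, E ⊆ U \ M := by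
        intro E hE
        obtain ⟨hEF', hEnsub⟩ := Finset.mem_filter.mp hE
        obtain ⟨hEneM, hEF⟩ := Finset.mem_erase.mp hEF'
        rcases hlam E hEF M hM with h | h | h
        · exact absurd h hEnsub
        · exact absurd (Finset.eq_of_subset_of_card_le h (hMmax E hEF)).symm hEneM
        · exact Finset.subset_sdiff.mpr ⟨hsub E hEF, h⟩
      have h2 := (ih F₂ (U \ M) (le_trans (Finset.card_le_card
          (Finset.filter_subset _ _)) hcard') h2sub
        (fun E hE => hne E (hF'sub (Finset.mem_filter.mp hE).1)) lam2).1
      have hb : (U \ M).card = U.card - M.card := Finset.card_sdiff_of_subset hMU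
      have hb1 : 1 ≤ (U \ M).card := by omega
      have hkey := arith_g_add ha1 hb1
      have hab : M.card + (U \ M).card = U.card := by omega
      rw [hab] at hkey
      rw [hsplit, hsplit2]
      calc M.card + ((∑ E ∈ F₁, E.card) + ∑ E ∈ F₂, E.card)
          ≤ M.card + ((M.card * M.card + M.card - 2) / 2 +
            ((U \ M).card * (U \ M).card + 3 * (U \ M).card - 2) / 2) :=
            Nat.add_le_add_left (add_le_add h1 h2) _
        _ ≤ (U.card * U.card + U.card - 2) / 2 := by rw [← add_assoc]; exact hkey
    refine ⟨?_, hg⟩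
    by_cases hU : U ∈ F
    · have hU1 : 1 ≤ U.card := Finset.card_pos.mpr (hne U hU)
      have hsplit : (∑ E ∈ F, E.card) = U.card + ∑ E ∈ F.erase U, E.card := by
        rw [← Finset.add_sum_erase F _ hU]
      have hcard' : (F.erase U).card ≤ n := by
        have := Finset.card_erase_of_mem hU
        omega
      have hEsub : F.erase U ⊆ F := Finset.erase_subset _ _
      have h1 := (ih (F.erase U) U hcard' (fun E hE => hsub E (hEsub hE))
        (fun E hE => hne E (hEsub hE))
        (fun E hE E' hE' => hlam E (hEsub hE) E' (hEsub hE'))).2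
        (Finset.notMem_erase _ _)
      have hkey := arith_k_add_g U.card hU1
      rw [hsplit]
      exact le_trans (Nat.add_le_add_left h1 _) hkey
    · exact le_trans (hg hU) (arith_g_le_f U.card)



lemma pt1 {K i n C : ℕ} (hi : i ≤ K) (hn : n ≤ C) :
    (K + 1) * n + i * C ≤ (K + 1) * C + i * n := by
  have h1 : (K + 1) * n = i * n + (K + 1 - i) * n := by rw [← Nat.add_mul]; congr 1; omega
  have h2 : (K + 1) * C = i * C + (K + 1 - i) * C := by rw [← Nat.add_mul]; congr 1; omega
  have h3 := Nat.mul_le_mul_left (K + 1 - i) hn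
  omega

lemma card_le_boundFormula {ι : Type*} [Fintype ι] [DecidableEq ι] {m N : ℕ}
    (hm : Fintype.card ι = m) (F : Finset (Finset ι)) (hne : ∀ E ∈ F, E ≠ ∅)
    (hsum : (∑ E ∈ F, E.card) ≤ N) : F.card ≤ boundFormula m N := by
  classical
  set K := imax m N with hKdef
  have hK : (∑ i ∈ Finset.Icc 1 K, i * m.choose i) ≤ N := by
    refine Nat.findGreatest_spec (P := fun k => ∑ i ∈ Finset.Icc 1 k, i * m.choose i ≤ N)
      (Nat.zero_le m) ?_
    simp
  have hKm : K ≤ m := Nat.findGreatest_le m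
  set n_ : ℕ → ℕ := fun i => (F.filter (fun E => E.card = i)).card with hn_
  have hmaps : ∀ E ∈ F, E.card ∈ Finset.Icc 1 m := by
    intro E hE
    rw [Finset.mem_Icc]
    constructor
    · exact Finset.card_pos.mpr (Finset.nonempty_iff_ne_empty.mpr (hne E hE))
    · rw [← hm]; exact Finset.card_le_univ E
  have hFcard : F.card = ∑ i ∈ Finset.Icc 1 m, n_ i :=
    Finset.card_eq_sum_card_fiberwise hmaps
  have hsum2 : (∑ E ∈ F, E.card) = ∑ i ∈ Finset.Icc 1 m, i * n_ i := by
    rw [← Finset.sum_fiberwise_of_maps_to hmaps]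
    refine Finset.sum_congr rfl fun i _ => ?_
    rw [Finset.sum_congr rfl (fun E hE => (Finset.mem_filter.mp hE).2),
      Finset.sum_const, smul_eq_mul, mul_comm]
  have hni : ∀ i, n_ i ≤ m.choose i := by
    intro i
    have : F.filter (fun E => E.card = i) ⊆ Finset.univ.powersetCard i := by
      intro E hE
      exact Finset.mem_powersetCard_univ.mpr (Finset.mem_filter.mp hE).2
    calc n_ i ≤ (Finset.univ.powersetCard i (α := ι)).card := Finset.card_le_card this
      _ = m.choose i := by rw [Finset.card_powersetCard, Finset.card_univ, hm]
  -- split sums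
  have hIcc : ∀ (f : ℕ → ℕ), (∑ i ∈ Finset.Icc 1 m, f i)
      = (∑ i ∈ Finset.Icc 1 K, f i) + ∑ i ∈ Finset.Ioc K m, f i := by
    intro f
    rw [show ∀ b : ℕ, Finset.Icc 1 b = Finset.Ioc 0 b from fun b => by ext; rw [Finset.mem_Icc, Finset.mem_Ioc]; omega,
      show ∀ b : ℕ, Finset.Icc 1 b = Finset.Ioc 0 b from fun b => by ext; rw [Finset.mem_Icc, Finset.mem_Ioc]; omega, Finset.sum_Ioc_consecutive f (Nat.zero_le K) hKm]
  set C := ∑ i ∈ Finset.Icc 1 K, m.choose i with hC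
  set Ssum := ∑ i ∈ Finset.Icc 1 K, i * m.choose i with hS
  have key : (K + 1) * F.card + Ssum ≤ (K + 1) * C + N := by
    rw [hFcard, hIcc, Nat.mul_add]
    have e1 : (K + 1) * (∑ i ∈ Finset.Icc 1 K, n_ i) + Ssum
        = ∑ i ∈ Finset.Icc 1 K, ((K + 1) * n_ i + i * m.choose i) := by
      rw [Finset.mul_sum, hS, ← Finset.sum_add_distrib]
    have e2 : ∑ i ∈ Finset.Icc 1 K, ((K + 1) * n_ i + i * m.choose i)
        ≤ ∑ i ∈ Finset.Icc 1 K, ((K + 1) * m.choose i + i * n_ i) := by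
      refine Finset.sum_le_sum fun i hi => pt1 (Finset.mem_Icc.mp hi).2 (hni i)
    have e3 : (K + 1) * (∑ i ∈ Finset.Ioc K m, n_ i) ≤ ∑ i ∈ Finset.Ioc K m, i * n_ i := by
      rw [Finset.mul_sum]
      refine Finset.sum_le_sum fun i hi => ?_
      exact Nat.mul_le_mul_right _ (Finset.mem_Ioc.mp hi).1
    have e4 : ∑ i ∈ Finset.Icc 1 K, ((K + 1) * m.choose i + i * n_ i)
        = (K + 1) * C + ∑ i ∈ Finset.Icc 1 K, i * n_ i := by
      rw [Finset.sum_add_distrib, hC, Finset.mul_sum]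
    have e5 : (∑ i ∈ Finset.Icc 1 K, i * n_ i) + (∑ i ∈ Finset.Ioc K m, i * n_ i) ≤ N := by
      rw [← hIcc, ← hsum2]; exact hsum
    omega
  -- conclude
  show F.card ≤ C + (N - Ssum) / (K + 1)
  rcases le_or_gt F.card C with h | h
  · exact le_trans h (Nat.le_add_right _ _)
  · obtain ⟨d, hd⟩ := Nat.exists_eq_add_of_lt h
    rw [hd]
    have h1 : (K + 1) * (C + d + 1) = (K + 1) * C + (K + 1) * (d + 1) := by ring
    rw [hd, h1] at key
    have h2 : (K + 1) * (d + 1) + Ssum ≤ N := by omega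
    have h3 : (d + 1) ≤ (N - Ssum) / (K + 1) := by
      rw [Nat.le_div_iff_mul_le (Nat.succ_pos K), Nat.mul_comm]
      exact Nat.le_sub_of_add_le h2
    omega


lemma mem_encoding {V : Type*} [DecidableEq V] {ι : Type*} [Fintype ι] [DecidableEq ι]
    (p : ι → List V) (v : V) (i : ι) : i ∈ encoding p v ↔ v ∈ p i := by
  simp [encoding]

lemma perpath {V : Type*} [DecidableEq V] {ι : Type*} [Fintype ι] [DecidableEq ι]
    (p : ι → List V) (l : List V) (hne : l ≠ []) (hl : l.Nodup) (Sset : Finset ι)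
    (hmono : ∀ i ∈ Sset, ∀ v w : V, v ∈ l → w ∈ l → v ∈ p i →
      l.idxOf v ≤ l.idxOf w → w ∈ p i)
    (hint : ∀ i : ι, ∀ u w x : V, u ∈ l → w ∈ l → x ∈ l → u ∈ p i → w ∈ p i →
      l.idxOf u ≤ l.idxOf x → l.idxOf x ≤ l.idxOf w → x ∈ p i)
    (I : Finset V) (hinj : Set.InjOn (encoding p) I) :
    (I.filter (fun v => v ∈ l)).card ≤
      (l.toFinset.image (fun v => encoding p v ∩ Sset)).card + 2 * Ssetᶜ.card := by
  classical
  set D := l.length with hD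
  have hD1 : 1 ≤ D := List.length_pos_iff.mpr hne
  set v₀ := l.head hne with hv₀
  set nd : ℕ → V := fun t => (l[t]?).getD v₀ with hnd
  have hndt : ∀ t (ht : t < D), nd t = l[t] := by
    intro t ht
    simp only [hnd, List.getElem?_eq_getElem ht, Option.getD_some]
  have hndmem : ∀ t, t < D → nd t ∈ l := by
    intro t ht; rw [hndt t ht]; exact List.getElem_mem ht
  have hidx : ∀ t (ht : t < D), l.idxOf (nd t) = t := by
    intro t ht; rw [hndt t ht]; exact List.Nodup.idxOf_getElem hl t ht
  -- change set
  set Chg : Finset ℕ := (Finset.range D).filter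
    (fun t => t = 0 ∨ encoding p (nd t) ≠ encoding p (nd (t - 1))) with hChg
  set SCh : Finset ℕ := (Finset.range D).filter
    (fun t => 0 < t ∧ encoding p (nd t) ∩ Sset ≠ encoding p (nd (t - 1)) ∩ Sset) with hSCh
  set OCh : ι → Finset ℕ := fun i => (Finset.range D).filter
    (fun t => 0 < t ∧ ¬(nd t ∈ p i ↔ nd (t - 1) ∈ p i)) with hOCh
  -- Step A
  have stepA : (I.filter (fun v => v ∈ l)).card ≤ Chg.card := by
    set f : V → ℕ := fun v =>
      if h : ((Finset.range D).filter (fun t => encoding p (nd t) = encoding p v)).Nonempty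
      then ((Finset.range D).filter (fun t => encoding p (nd t) = encoding p v)).min' h
      else 0 with hf
    have hfspec : ∀ v ∈ I.filter (fun v => v ∈ l),
        f v ∈ Chg ∧ encoding p (nd (f v)) = encoding p v := by
      intro v hv
      obtain ⟨hvI, hvl⟩ := Finset.mem_filter.mp hv
      have hTne : ((Finset.range D).filter
          (fun t => encoding p (nd t) = encoding p v)).Nonempty := by
        refine ⟨l.idxOf v, ?_⟩
        have hlt : l.idxOf v < D := List.idxOf_lt_length_iff.mpr hvl
        rw [Finset.mem_filter, Finset.mem_range]
        refine ⟨hlt, ?_⟩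
        congr 1
        rw [hndt _ hlt]
        exact List.getElem_idxOf hlt
      have hfv : f v = ((Finset.range D).filter
          (fun t => encoding p (nd t) = encoding p v)).min' hTne := by
        rw [hf]; exact dif_pos hTne
      have hmem := Finset.min'_mem _ hTne
      rw [← hfv] at hmem
      obtain ⟨hfD, hfenc⟩ := Finset.mem_filter.mp hmem
      rw [Finset.mem_range] at hfD
      refine ⟨?_, hfenc⟩
      rw [hChg, Finset.mem_filter, Finset.mem_range]
      refine ⟨hfD, ?_⟩
      rcases Nat.eq_zero_or_pos (f v) with h0 | hpos
      · exact Or.inl h0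
      · right
        rw [hfenc]
        intro hcon
        have hmem2 : f v - 1 ∈ (Finset.range D).filter
            (fun t => encoding p (nd t) = encoding p v) := by
          rw [Finset.mem_filter, Finset.mem_range]
          exact ⟨by omega, hcon.symm⟩
        have := Finset.min'_le _ _ hmem2
        rw [← hfv] at this
        omega
    refine Finset.card_le_card_of_injOn f (fun v hv => (hfspec v hv).1) ?_
    intro v hv w hw hfvw
    have h1 := (hfspec v hv).2
    have h2 := (hfspec w hw).2
    rw [hfvw] at h1
    have hIv : v ∈ (I : Set V) := Finset.mem_coe.mpr (Finset.mem_filter.mp (Finset.mem_coe.mp hv)).1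
    have hIw : w ∈ (I : Set V) := Finset.mem_coe.mpr (Finset.mem_filter.mp (Finset.mem_coe.mp hw)).1
    exact (hinj hIw hIv (h2.symm.trans h1)).symm
  -- Step B: Chg covered
  have stepB : Chg ⊆ insert 0 (SCh ∪ Ssetᶜ.biUnion OCh) := by
    intro t ht
    rw [hChg, Finset.mem_filter, Finset.mem_range] at ht
    obtain ⟨htD, h0 | hch⟩ := ht
    · rw [h0]; exact Finset.mem_insert_self _ _
    rcases Nat.eq_zero_or_pos t with h0 | hpos
    · rw [h0]; exact Finset.mem_insert_self _ _
    refine Finset.mem_insert_of_mem ?_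
    have hdiff : ∃ i : ι, ¬((nd t ∈ p i) ↔ (nd (t - 1) ∈ p i)) := by
      by_contra hcon
      push_neg at hcon
      refine hch ?_
      ext i
      rw [mem_encoding, mem_encoding]
      exact hcon i
    obtain ⟨i, hi⟩ := hdiff
    by_cases hiS : i ∈ Sset
    · refine Finset.mem_union_left _ ?_
      rw [hSCh, Finset.mem_filter, Finset.mem_range]
      refine ⟨htD, hpos, ?_⟩
      intro hcon
      refine hi ?_
      constructor
      · intro hmem
        have : i ∈ encoding p (nd t) ∩ Sset :=
          Finset.mem_inter.mpr ⟨(mem_encoding p _ i).mpr hmem, hiS⟩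
        rw [hcon] at this
        exact (mem_encoding p _ i).mp (Finset.mem_inter.mp this).1
      · intro hmem
        have : i ∈ encoding p (nd (t - 1)) ∩ Sset :=
          Finset.mem_inter.mpr ⟨(mem_encoding p _ i).mpr hmem, hiS⟩
        rw [← hcon] at this
        exact (mem_encoding p _ i).mp (Finset.mem_inter.mp this).1
    · refine Finset.mem_union_right _ ?_
      refine Finset.mem_biUnion.mpr ⟨i, Finset.mem_compl.mpr hiS, ?_⟩
      rw [hOCh, Finset.mem_filter, Finset.mem_range]
      exact ⟨htD, hpos, hi⟩
  -- Step C: each OCh has card ≤ 2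
  have stepC : ∀ i : ι, (OCh i).card ≤ 2 := by
    intro i
    set A : Finset ℕ := (Finset.range D).filter (fun t => nd t ∈ p i) with hA
    rcases A.eq_empty_or_nonempty with hAe | hAne
    · have : OCh i = ∅ := by
        rw [Finset.eq_empty_iff_forall_notMem]
        intro t ht
        rw [hOCh, Finset.mem_filter, Finset.mem_range] at ht
        obtain ⟨htD, hpos, hxor⟩ := ht
        have h1 : nd t ∉ p i := by
          intro hmem
          exact Finset.eq_empty_iff_forall_notMem.mp hAe t
            (Finset.mem_filter.mpr ⟨Finset.mem_range.mpr htD, hmem⟩)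
        have h2 : nd (t - 1) ∉ p i := by
          intro hmem
          exact Finset.eq_empty_iff_forall_notMem.mp hAe (t - 1)
            (Finset.mem_filter.mpr ⟨Finset.mem_range.mpr (by omega), hmem⟩)
        exact hxor (iff_of_false h1 h2)
      rw [this]; simp
    obtain ⟨a, b, haA, hbA, hamin, hbmax⟩ :
        ∃ a b, a ∈ A ∧ b ∈ A ∧ (∀ t ∈ A, a ≤ t) ∧ (∀ t ∈ A, t ≤ b) :=
      ⟨A.min' hAne, A.max' hAne, A.min'_mem hAne, A.max'_mem hAne,
        fun t ht => A.min'_le t ht, fun t ht => A.le_max' t ht⟩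
    have haA := Finset.mem_filter.mp haA
    have hbA := Finset.mem_filter.mp hbA
    rw [Finset.mem_range] at haA hbA
    have hintv : ∀ t, a ≤ t → t ≤ b → nd t ∈ p i := by
      intro t hat htb
      have htD : t < D := by omega
      refine hint i (nd a) (nd b) (nd t) (hndmem a haA.1) (hndmem b hbA.1) (hndmem t htD)
        haA.2 hbA.2 ?_ ?_
      · rw [hidx a haA.1, hidx t htD]; exact hat
      · rw [hidx t htD, hidx b hbA.1]; exact htb
    have hsub : OCh i ⊆ {a, b + 1} := by
      intro t ht
      rw [hOCh, Finset.mem_filter, Finset.mem_range] at ht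
      obtain ⟨htD, hpos, hxor⟩ := ht
      rw [Finset.mem_insert, Finset.mem_singleton]
      by_cases hmem : nd t ∈ p i
      · left
        have htA : t ∈ A := Finset.mem_filter.mpr ⟨Finset.mem_range.mpr htD, hmem⟩
        have hat : a ≤ t := hamin _ htA
        have htb : t ≤ b := hbmax _ htA
        by_contra hta
        have h1 : a ≤ t - 1 := by omega
        have h2 : t - 1 ≤ b := by omega
        exact hxor (iff_of_true hmem (hintv _ h1 h2))
      · right
        have hmem' : nd (t - 1) ∈ p i := by
          by_contra h
          exact hxor (iff_of_false hmem h)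
        have htA : t - 1 ∈ A :=
          Finset.mem_filter.mpr ⟨Finset.mem_range.mpr (by omega), hmem'⟩
        have hat : a ≤ t - 1 := hamin _ htA
        have htb : t - 1 ≤ b := hbmax _ htA
        by_contra hta
        have h1 : a ≤ t := by omega
        have h2 : t ≤ b := by omega
        exact hxor (iff_of_true (hintv _ h1 h2) hmem')
    calc (OCh i).card ≤ ({a, b + 1} : Finset ℕ).card := Finset.card_le_card hsub
      _ ≤ 2 := Finset.card_insert_le _ _ |>.trans (by simp)
  -- Step D: SCh.card + 1 ≤ image card
  have smono : ∀ t t' : ℕ, t ≤ t' → t' < D →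
      encoding p (nd t) ∩ Sset ⊆ encoding p (nd t') ∩ Sset := by
    intro t t' htt ht'
    intro i hi
    obtain ⟨hienc, hiS⟩ := Finset.mem_inter.mp hi
    refine Finset.mem_inter.mpr ⟨(mem_encoding p _ i).mpr ?_, hiS⟩
    refine hmono i hiS (nd t) (nd t') (hndmem t (by omega)) (hndmem t' ht')
      ((mem_encoding p _ i).mp hienc) ?_
    rw [hidx t (by omega), hidx t' ht']
    exact htt
  have stepD : SCh.card + 1 ≤ (l.toFinset.image (fun v => encoding p v ∩ Sset)).card := by
    set Img := l.toFinset.image (fun v => encoding p v ∩ Sset) with hImg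
    have h0mem : encoding p (nd 0) ∩ Sset ∈ Img :=
      Finset.mem_image.mpr ⟨nd 0, List.mem_toFinset.mpr (hndmem 0 hD1), rfl⟩
    have hmapsto : ∀ t ∈ SCh, encoding p (nd t) ∩ Sset ∈ Img.erase (encoding p (nd 0) ∩ Sset) := by
      intro t ht
      rw [hSCh, Finset.mem_filter, Finset.mem_range] at ht
      obtain ⟨htD, hpos, hch⟩ := ht
      refine Finset.mem_erase.mpr ⟨?_, Finset.mem_image.mpr
        ⟨nd t, List.mem_toFinset.mpr (hndmem t htD), rfl⟩⟩
      intro hcon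
      have h1 : encoding p (nd 0) ∩ Sset ⊆ encoding p (nd (t-1)) ∩ Sset :=
        smono 0 (t-1) (by omega) (by omega)
      have h2 : encoding p (nd (t-1)) ∩ Sset ⊆ encoding p (nd t) ∩ Sset :=
        smono (t-1) t (by omega) htD
      rw [← hcon] at h1
      exact hch (Finset.Subset.antisymm h2 h1).symm
    have hinj2 : Set.InjOn (fun t => encoding p (nd t) ∩ Sset) SCh := by
      intro t ht t' ht' heq0
      have heq : encoding p (nd t) ∩ Sset = encoding p (nd t') ∩ Sset := heq0
      rw [Finset.mem_coe, hSCh, Finset.mem_filter, Finset.mem_range] at ht ht'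
      obtain ⟨htD, hpos, hch⟩ := ht
      obtain ⟨ht'D, h'pos, h'ch⟩ := ht'
      by_contra hne'
      rcases Nat.lt_or_ge t t' with hlt | hge
      · have h1 : encoding p (nd t) ∩ Sset ⊆ encoding p (nd (t'-1)) ∩ Sset :=
          smono t (t'-1) (by omega) (by omega)
        have h2 : encoding p (nd (t'-1)) ∩ Sset ⊆ encoding p (nd t') ∩ Sset :=
          smono (t'-1) t' (by omega) ht'D
        rw [heq] at h1
        exact h'ch (Finset.Subset.antisymm h2 h1).symm
      · have hlt : t' < t := by omega
        have h1 : encoding p (nd t') ∩ Sset ⊆ encoding p (nd (t-1)) ∩ Sset :=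
          smono t' (t-1) (by omega) (by omega)
        have h2 : encoding p (nd (t-1)) ∩ Sset ⊆ encoding p (nd t) ∩ Sset :=
          smono (t-1) t (by omega) htD
        rw [← heq] at h1
        exact hch (Finset.Subset.antisymm h2 h1).symm
    have hcard := Finset.card_le_card_of_injOn _ hmapsto hinj2
    have herase := Finset.card_erase_of_mem h0mem
    have hpos : 1 ≤ Img.card := Finset.card_pos.mpr ⟨_, h0mem⟩
    omega
  -- combine
  have hcount : Chg.card ≤ 1 + SCh.card + 2 * Ssetᶜ.card := by
    calc Chg.card ≤ (insert 0 (SCh ∪ Ssetᶜ.biUnion OCh)).card := Finset.card_le_card stepB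
      _ ≤ (SCh ∪ Ssetᶜ.biUnion OCh).card + 1 := Finset.card_insert_le _ _
      _ ≤ SCh.card + (Ssetᶜ.biUnion OCh).card + 1 := by
          have := Finset.card_union_le SCh (Ssetᶜ.biUnion OCh)
          omega
      _ ≤ SCh.card + (∑ i ∈ Ssetᶜ, (OCh i).card) + 1 := by
          have := Finset.card_biUnion_le (s := Ssetᶜ) (t := OCh)
          omega
      _ ≤ SCh.card + (∑ _i ∈ Ssetᶜ, 2) + 1 := by
          have := Finset.sum_le_sum (fun i (_ : i ∈ Ssetᶜ) => stepC i)
          omega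
      _ = 1 + SCh.card + 2 * Ssetᶜ.card := by
          rw [Finset.sum_const, smul_eq_mul]
          ring
  calc (I.filter (fun v => v ∈ l)).card ≤ Chg.card := stepA
    _ ≤ 1 + SCh.card + 2 * Ssetᶜ.card := hcount
    _ ≤ (l.toFinset.image (fun v => encoding p v ∩ Sset)).card + 2 * Ssetᶜ.card := by omega

lemma doublecount {α : Type*} [DecidableEq α] (A : Finset α) (F : Finset (Finset α)) :
    (∑ i ∈ A, (F.filter (fun E => i ∈ E)).card) = ∑ E ∈ F, (E ∩ A).card := by
  simp_rw [Finset.card_filter]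
  rw [Finset.sum_comm]
  refine Finset.sum_congr rfl fun E _ => ?_
  rw [← Finset.card_filter, Finset.filter_mem_eq_inter, Finset.inter_comm]

lemma perserver {V : Type*} [Fintype V] [DecidableEq V]
    {S : ℕ} (ms : Fin S → ℕ) (m : ℕ) (hm : m = ∑ s, ms s)
    (p : (s : Fin S) × Fin (ms s) → List V) (r : Fin S → V)
    (hnodup : ∀ idx, (p idx).Nodup) (hcons : Consistent p)
    (hlast : ∀ idx : (s : Fin S) × Fin (ms s), (p idx).getLast? = some (r idx.1))
    (I : Finset V) (hinj : Set.InjOn (encoding p) I) (s : Fin S) :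
    (∑ j : Fin (ms s), (I.filter (fun v => v ∈ p ⟨s, j⟩)).card) ≤
      ((ms s * ms s + 3 * ms s - 2) / 2 + 2 * ms s * (m - ms s)) := by
  classical
  set Sset : Finset ((s' : Fin S) × Fin (ms s')) :=
    Finset.univ.filter (fun i => i.1 = s) with hSset
  have hemb : Function.Injective (fun j : Fin (ms s) => (⟨s, j⟩ : (s' : Fin S) × Fin (ms s'))) := by
    intro a b h
    exact eq_of_heq (Sigma.mk.inj_iff.mp h).2
  have hmap : Sset = Finset.univ.map ⟨_, hemb⟩ := by
    ext i
    simp only [hSset, Finset.mem_filter, Finset.mem_univ, true_and, Finset.mem_map,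
      Function.Embedding.coeFn_mk]
    constructor
    · rintro h
      rcases i with ⟨s', j'⟩
      rcases h with rfl
      exact ⟨j', rfl⟩
    · rintro ⟨j, rfl⟩; rfl
  have hScard : Sset.card = ms s := by
    rw [hmap, Finset.card_map, Finset.card_univ, Fintype.card_fin]
  have hcardι : Fintype.card ((s' : Fin S) × Fin (ms s')) = m := by
    rw [Fintype.card_sigma]
    simp only [Fintype.card_fin]
    exact hm.symm
  have hcompl : (Ssetᶜ : Finset ((s' : Fin S) × Fin (ms s'))).card = m - ms s := by
    rw [Finset.card_compl, hScard, hcardι]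
  have hlastr : ∀ i : (s' : Fin S) × Fin (ms s'), i ∈ Sset → (p i).getLast? = some (r s) := by
    intro i hi
    rw [hSset, Finset.mem_filter] at hi
    rw [← hi.2]
    exact hlast i
  have hjSmem : ∀ j : Fin (ms s), (⟨s, j⟩ : (s' : Fin S) × Fin (ms s')) ∈ Sset := by
    intro j
    rw [hSset, Finset.mem_filter]
    exact ⟨Finset.mem_univ _, rfl⟩
  -- per path bound
  have hpp : ∀ j : Fin (ms s),
      (I.filter (fun v => v ∈ p ⟨s, j⟩)).card ≤
        ((p ⟨s, j⟩).toFinset.image (fun v => encoding p v ∩ Sset)).card + 2 * Ssetᶜ.card := by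
    intro j
    have hnej : p ⟨s, j⟩ ≠ [] := by
      intro h
      have h2 := hlast ⟨s, j⟩
      rw [h] at h2
      simp at h2
    refine perpath p (p ⟨s, j⟩) hnej (hnodup _) Sset ?_ ?_ I hinj
    · intro i hiS v w hv hw hvpi hidxvw
      exact suffix_mem (hnodup _) (hcons ⟨s, j⟩ i) (hlastr _ (hjSmem j)) (hlastr i hiS)
        hv hvpi hw hidxvw
    · intro i u w x hu hw hx hupi hwpi h1 h2
      refine between_mem (hcons ⟨s, j⟩ i) hu hw hupi hwpi hx ?_ ?_
      · exact le_trans (min_le_left _ _) h1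
      · exact le_trans h2 (le_max_right _ _)
  -- the laminar family
  set F : Finset (Finset ((s' : Fin S) × Fin (ms s'))) :=
    Finset.univ.biUnion (fun j : Fin (ms s) =>
      (p ⟨s, j⟩).toFinset.image (fun v => encoding p v ∩ Sset)) with hF
  have hFmem : ∀ E, E ∈ F ↔ ∃ j : Fin (ms s), ∃ v ∈ p ⟨s, j⟩, E = encoding p v ∩ Sset := by
    intro E
    rw [hF, Finset.mem_biUnion]
    constructor
    · rintro ⟨j, _, hE⟩
      obtain ⟨v, hv, rfl⟩ := Finset.mem_image.mp hE
      exact ⟨j, v, List.mem_toFinset.mp hv, rfl⟩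
    · rintro ⟨j, v, hv, rfl⟩
      exact ⟨j, Finset.mem_univ _, Finset.mem_image.mpr ⟨v, List.mem_toFinset.mpr hv, rfl⟩⟩
  have hFsub : ∀ E ∈ F, E ⊆ Sset := by
    intro E hE
    obtain ⟨j, v, hv, rfl⟩ := (hFmem E).mp hE
    exact Finset.inter_subset_right
  have hFne : ∀ E ∈ F, E.Nonempty := by
    intro E hE
    obtain ⟨j, v, hv, rfl⟩ := (hFmem E).mp hE
    exact ⟨⟨s, j⟩, Finset.mem_inter.mpr ⟨(mem_encoding p v _).mpr hv, hjSmem j⟩⟩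
  have hkey : ∀ (v w : V) (i : (s' : Fin S) × Fin (ms s')), i ∈ Sset →
      v ∈ p i → w ∈ p i → (p i).idxOf v ≤ (p i).idxOf w →
      encoding p v ∩ Sset ⊆ encoding p w ∩ Sset := by
    intro v w i hiS hv hw hvw
    intro i' hi'
    obtain ⟨hienc, hi'S⟩ := Finset.mem_inter.mp hi'
    refine Finset.mem_inter.mpr ⟨(mem_encoding p w i').mpr ?_, hi'S⟩
    exact suffix_mem (hnodup i) (hcons i i') (hlastr i hiS) (hlastr i' hi'S)
      hv ((mem_encoding p v i').mp hienc) hw hvw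
  have hFlam : Laminar F := by
    intro E hE E' hE'
    obtain ⟨j, v, hv, rfl⟩ := (hFmem E).mp hE
    obtain ⟨j', w, hw, rfl⟩ := (hFmem E').mp hE'
    rcases Finset.disjoint_or_nonempty_inter (encoding p v ∩ Sset) (encoding p w ∩ Sset)
      with hd | ⟨i, hi⟩
    · exact Or.inr (Or.inr hd)
    have hiv := Finset.mem_inter.mp (Finset.mem_inter.mp hi).1
    have hiS := (Finset.mem_inter.mp (Finset.mem_inter.mp hi).1).2
    have hvpi : v ∈ p i := (mem_encoding p v i).mp hiv.1
    have hwpi : w ∈ p i := by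
      have := Finset.mem_inter.mp (Finset.mem_inter.mp hi).2
      exact (mem_encoding p w i).mp this.1
    rcases Nat.le_or_le ((p i).idxOf v) ((p i).idxOf w) with hle | hle
    · exact Or.inl (hkey v w i hiS hvpi hwpi hle)
    · exact Or.inr (Or.inl (hkey w v i hiS hwpi hvpi hle))
  have hlamsum : (∑ E ∈ F, E.card) ≤ (ms s * ms s + 3 * ms s - 2) / 2 := by
    have := (laminar_aux F.card F Sset le_rfl hFsub hFne hFlam).1
    rw [hScard] at this
    exact this
  -- link sum of image cards to laminar sum
  have himg : ∀ j : Fin (ms s),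
      (p ⟨s, j⟩).toFinset.image (fun v => encoding p v ∩ Sset)
        = F.filter (fun E => (⟨s, j⟩ : (s' : Fin S) × Fin (ms s')) ∈ E) := by
    intro j
    ext E
    rw [Finset.mem_filter, Finset.mem_image, hFmem]
    constructor
    · rintro ⟨v, hv, rfl⟩
      have hv' := List.mem_toFinset.mp hv
      exact ⟨⟨j, v, hv', rfl⟩,
        Finset.mem_inter.mpr ⟨(mem_encoding p v _).mpr hv', hjSmem j⟩⟩
    · rintro ⟨⟨j', v, hv, rfl⟩, hmem⟩
      have : v ∈ p ⟨s, j⟩ := (mem_encoding p v _).mp (Finset.mem_inter.mp hmem).1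
      exact ⟨v, List.mem_toFinset.mpr this, rfl⟩
  have hlink : (∑ j : Fin (ms s),
      ((p ⟨s, j⟩).toFinset.image (fun v => encoding p v ∩ Sset)).card)
        = ∑ E ∈ F, E.card := by
    calc (∑ j : Fin (ms s), ((p ⟨s, j⟩).toFinset.image (fun v => encoding p v ∩ Sset)).card)
        = ∑ j : Fin (ms s), (F.filter (fun E =>
            (⟨s, j⟩ : (s' : Fin S) × Fin (ms s')) ∈ E)).card := by
          refine Finset.sum_congr rfl fun j _ => ?_
          rw [himg j]
      _ = ∑ i ∈ Sset, (F.filter (fun E => i ∈ E)).card := by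
          rw [hmap, Finset.sum_map]
          rfl
      _ = ∑ E ∈ F, (E ∩ Sset).card := doublecount Sset F
      _ = ∑ E ∈ F, E.card := by
          refine Finset.sum_congr rfl fun E hE => ?_
          rw [Finset.inter_eq_left.mpr (hFsub E hE)]
  calc (∑ j : Fin (ms s), (I.filter (fun v => v ∈ p ⟨s, j⟩)).card)
      ≤ ∑ j : Fin (ms s),
          (((p ⟨s, j⟩).toFinset.image (fun v => encoding p v ∩ Sset)).card
            + 2 * Ssetᶜ.card) := Finset.sum_le_sum fun j _ => hpp j
    _ = (∑ E ∈ F, E.card) + ms s * (2 * Ssetᶜ.card) := by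
        rw [Finset.sum_add_distrib, hlink, Finset.sum_const, Finset.card_univ,
          Fintype.card_fin, smul_eq_mul]
    _ ≤ (ms s * ms s + 3 * ms s - 2) / 2 + 2 * ms s * (m - ms s) := by
        rw [hcompl]
        have : ms s * (2 * (m - ms s)) = 2 * ms s * (m - ms s) := by ring
        rw [this]
        exact Nat.add_le_add_right hlamsum _

/-- Multi-server identifiability with fixed client assignment (Theorem V.10):
with `S` servers, server `s` having `ms s` consistent client paths ending at a
common node `r s`, `m = Σ_s ms s` paths in total on `n` nodes, and
`N_max = min {Σ_p d_p, Σ_s [(ms s² + 3·ms s − 2)/2 + 2·ms s·(m − ms s)]}`, the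
number of identifiable nodes is at most `min (boundFormula m N_max) n`. -/
theorem identifiable_le_multi_server {V : Type*} [Fintype V] [DecidableEq V]
    {S : ℕ} (ms : Fin S → ℕ) (m : ℕ) (hm : m = ∑ s, ms s)
    (p : (s : Fin S) × Fin (ms s) → List V) (r : Fin S → V)
    (hnodup : ∀ idx, (p idx).Nodup) (hcons : Consistent p)
    (hlast : ∀ idx : (s : Fin S) × Fin (ms s), (p idx).getLast? = some (r idx.1)) :
    {v : V | Identifiable p v}.ncard ≤
      min (boundFormula m
          (min (∑ idx : (s : Fin S) × Fin (ms s), (p idx).length)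
            (∑ s : Fin S, (((ms s) ^ 2 + 3 * ms s - 2) / 2 + 2 * ms s * (m - ms s)))))
        (Fintype.card V) := by
  classical
  set I : Finset V := Finset.univ.filter (fun v => Identifiable p v) with hI
  have hset : {v : V | Identifiable p v} = ↑I := by
    ext v
    simp [hI]
  rw [hset, Set.ncard_coe_finset]
  have hident : ∀ v ∈ I, Identifiable p v := by
    intro v hv
    exact (Finset.mem_filter.mp hv).2
  have hinj : Set.InjOn (encoding p) I := by
    intro v hv w hw hvw
    by_contra hne
    exact (hident w (Finset.mem_coe.mp hw)).2 v hne hvw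
  refine le_min ?_ (le_trans (Finset.card_le_card (Finset.subset_univ I))
    (le_of_eq (Finset.card_univ)))
  set Φ := I.image (encoding p) with hΦ
  have hcardΦ : I.card = Φ.card := (Finset.card_image_of_injOn hinj).symm
  rw [hcardΦ]
  refine card_le_boundFormula ?_ Φ ?_ ?_
  · rw [Fintype.card_sigma]
    simp only [Fintype.card_fin]
    exact hm.symm
  · intro E hE
    obtain ⟨v, hv, rfl⟩ := Finset.mem_image.mp hE
    exact (hident v hv).1
  · have h1 : (∑ E ∈ Φ, E.card) = ∑ v ∈ I, (encoding p v).card := by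
      rw [hΦ]
      refine Finset.sum_image ?_
      intro x hx y hy h
      exact hinj (Finset.mem_coe.mpr hx) (Finset.mem_coe.mpr hy) h
    have h2 : (∑ v ∈ I, (encoding p v).card)
        = ∑ i : (s : Fin S) × Fin (ms s), (I.filter (fun v => v ∈ p i)).card := by
      calc (∑ v ∈ I, (encoding p v).card)
          = ∑ v ∈ I, ∑ i : (s : Fin S) × Fin (ms s), if v ∈ p i then 1 else 0 := by
            refine Finset.sum_congr rfl fun v _ => ?_
            rw [encoding, Finset.card_filter]
        _ = ∑ i : (s : Fin S) × Fin (ms s), ∑ v ∈ I, if v ∈ p i then 1 else 0 :=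
            Finset.sum_comm
        _ = ∑ i : (s : Fin S) × Fin (ms s), (I.filter (fun v => v ∈ p i)).card := by
            refine Finset.sum_congr rfl fun i _ => (Finset.card_filter _ _).symm
    rw [h1, h2]
    refine le_min ?_ ?_
    · refine Finset.sum_le_sum fun i _ => ?_
      calc (I.filter (fun v => v ∈ p i)).card ≤ (p i).toFinset.card := by
            refine Finset.card_le_card ?_
            intro v hv
            exact List.mem_toFinset.mpr (Finset.mem_filter.mp hv).2
        _ = (p i).length := List.toFinset_card_of_nodup (hnodup i)
    · rw [← Finset.univ_sigma_univ, Finset.sum_sigma]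
      refine Finset.sum_le_sum fun s _ => ?_
      have := perserver ms m hm p r hnodup hcons hlast I hinj s
      rw [pow_two]
      exact this
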